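/- With κ_n(z) = nσ'(z) + κ₀(z) and ω_n = n²σ''/2 + nκ₀' + ω₀ as above, the transmutation identities hold: ∂_z ∘ (H(σ,κ_n)+ω_n) = (H(σ,κ_{n+1})+ω_{n+1}) ∘ ∂_z and (σ(z)∂_z + κ_{n+1}(z)) ∘ (H(σ,κ_{n+1})+ω_{n+1}) = (H(σ,κ_n)+ω_n) ∘ (σ(z)∂_z + κ_{n+1}(z)). Consequently, if (H(σ,κ_n)+ω_n)F = 0 then (H(σ,κ_{n+1})+ω_{n+1})(∂_zF) = 0, and if (H(σ,κ_{n+1})+ω_{n+1})F = 0 then (H(σ,κ_n)+ω_n)((σ∂_z+κ_{n+1})F) = 0. -/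

import Mathlib

open Polynomial

/-- The hypergeometric class operator
`H(σ,κ) = σ(z)∂_z² + (σ'(z)+κ(z))∂_z + κ'/2`. -/
noncomputable def Hop (σ κ : Polynomial ℂ) (f : ℂ → ℂ) (z : ℂ) : ℂ :=
  σ.eval z * deriv (deriv f) z
    + ((derivative σ).eval z + κ.eval z) * deriv f z
    + ((derivative κ).coeff 0 / 2) * f z

/-- `κ_n(z) = nσ'(z) + κ₀(z)`. -/
noncomputable def kap (σ κ₀ : Polynomial ℂ) (n : ℂ) : Polynomial ℂ :=
  Polynomial.C n * derivative σ + κ₀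

/-- `ω_n = n²σ''/2 + nκ₀' + ω₀`. -/
noncomputable def om (σ κ₀ : Polynomial ℂ) (ω₀ n : ℂ) : ℂ :=
  n ^ 2 * (derivative (derivative σ)).coeff 0 / 2 + n * (derivative κ₀).coeff 0 + ω₀

private lemma poly_deriv_mul (p : Polynomial ℂ) {g : ℂ → ℂ} (hg : Differentiable ℂ g) :
    deriv (fun w => p.eval w * g w)
      = fun z => (derivative p).eval z * g z + p.eval z * deriv g z := by
  funext z
  rw [deriv_fun_mul (p.differentiableAt) (hg z), Polynomial.deriv]

private lemma poly_diff_mul (p : Polynomial ℂ) {g : ℂ → ℂ} (hg : Differentiable ℂ g) :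
    Differentiable ℂ (fun w => p.eval w * g w) := p.differentiable.mul hg

private lemma deriv_comb2 (p q : Polynomial ℂ) {g h : ℂ → ℂ}
    (hg : Differentiable ℂ g) (hh : Differentiable ℂ h) :
    deriv (fun z => p.eval z * g z + q.eval z * h z)
      = fun z => ((derivative p).eval z * g z + p.eval z * deriv g z)
        + ((derivative q).eval z * h z + q.eval z * deriv h z) := by
  funext z
  rw [deriv_fun_add ((poly_diff_mul p hg) z) ((poly_diff_mul q hh) z),
      congrFun (poly_deriv_mul p hg) z, congrFun (poly_deriv_mul q hh) z]

private lemma deriv_comb3 (p q : Polynomial ℂ) (c : ℂ) {g h k : ℂ → ℂ}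
    (hg : Differentiable ℂ g) (hh : Differentiable ℂ h) (hk : Differentiable ℂ k) :
    deriv (fun z => p.eval z * g z + q.eval z * h z + c * k z)
      = fun z => ((derivative p).eval z * g z + p.eval z * deriv g z)
        + ((derivative q).eval z * h z + q.eval z * deriv h z) + c * deriv k z := by
  funext z
  rw [deriv_fun_add (((poly_diff_mul p hg).fun_add (poly_diff_mul q hh)) z) ((hk z).const_mul c),
      deriv_fun_add ((poly_diff_mul p hg) z) ((poly_diff_mul q hh) z),
      deriv_const_mul c (hk z),
      congrFun (poly_deriv_mul p hg) z, congrFun (poly_deriv_mul q hh) z]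

private lemma diffs {f : ℂ → ℂ} (hf : ContDiff ℂ 3 f) :
    Differentiable ℂ f ∧ Differentiable ℂ (deriv f) ∧ Differentiable ℂ (deriv (deriv f)) := by
  refine ⟨hf.differentiable (by norm_num), ?_, ?_⟩
  · have := ContDiff.iterate_deriv' 2 1 (f := f) (by exact_mod_cast hf)
    simpa using this.differentiable (by norm_num)
  · have := ContDiff.iterate_deriv' 1 2 (f := f) (by exact_mod_cast hf)
    simpa [Function.iterate_succ] using this.differentiable (by norm_num)

/-- Transmutation identities `∂∘(H(σ,κ_n)+ω_n) = (H(σ,κ_{n+1})+ω_{n+1})∘∂` and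
`(σ∂+κ_{n+1})∘(H(σ,κ_{n+1})+ω_{n+1}) = (H(σ,κ_n)+ω_n)∘(σ∂+κ_{n+1})`,
together with the resulting recurrence relations for solutions. -/
theorem transmutation_and_recurrence (σ κ₀ : Polynomial ℂ)
    (hσ : σ.natDegree ≤ 2) (hκ : κ₀.natDegree ≤ 1) (ω₀ n : ℂ) :
    (∀ f : ℂ → ℂ, ContDiff ℂ 3 f → ∀ z,
      deriv (fun w => Hop σ (kap σ κ₀ n) f w + om σ κ₀ ω₀ n * f w) z
        = Hop σ (kap σ κ₀ (n + 1)) (deriv f) z + om σ κ₀ ω₀ (n + 1) * deriv f z) ∧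
    (∀ f : ℂ → ℂ, ContDiff ℂ 3 f → ∀ z,
      σ.eval z * deriv (fun w => Hop σ (kap σ κ₀ (n + 1)) f w + om σ κ₀ ω₀ (n + 1) * f w) z
          + (kap σ κ₀ (n + 1)).eval z
              * (Hop σ (kap σ κ₀ (n + 1)) f z + om σ κ₀ ω₀ (n + 1) * f z)
        = Hop σ (kap σ κ₀ n)
              (fun w => σ.eval w * deriv f w + (kap σ κ₀ (n + 1)).eval w * f w) z
          + om σ κ₀ ω₀ n
              * (σ.eval z * deriv f z + (kap σ κ₀ (n + 1)).eval z * f z)) ∧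
    (∀ F : ℂ → ℂ, ContDiff ℂ 3 F →
      (∀ z, Hop σ (kap σ κ₀ n) F z + om σ κ₀ ω₀ n * F z = 0) →
      ∀ z, Hop σ (kap σ κ₀ (n + 1)) (deriv F) z + om σ κ₀ ω₀ (n + 1) * deriv F z = 0) ∧
    (∀ F : ℂ → ℂ, ContDiff ℂ 3 F →
      (∀ z, Hop σ (kap σ κ₀ (n + 1)) F z + om σ κ₀ ω₀ (n + 1) * F z = 0) →
      ∀ z, Hop σ (kap σ κ₀ n)
              (fun w => σ.eval w * deriv F w + (kap σ κ₀ (n + 1)).eval w * F w) z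
            + om σ κ₀ ω₀ n
                * (σ.eval z * deriv F z + (kap σ κ₀ (n + 1)).eval z * F z) = 0) := by
  -- constancy of second derivative of σ and of derivative of κ₀
  have ha : ∀ z : ℂ, (derivative (derivative σ)).eval z = (derivative (derivative σ)).coeff 0 := by
    intro z
    have h1 : (derivative (derivative σ)).natDegree = 0 := by
      have e1 := Polynomial.natDegree_derivative_le σ
      have e2 := Polynomial.natDegree_derivative_le (derivative σ)
      omega
    obtain ⟨c, hc⟩ := Polynomial.natDegree_eq_zero.mp h1
    rw [← hc]; simp
  have hb : ∀ z : ℂ, (derivative κ₀).eval z = (derivative κ₀).coeff 0 := by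
    intro z
    have h1 : (derivative κ₀).natDegree = 0 := by
      have e1 := Polynomial.natDegree_derivative_le κ₀
      omega
    obtain ⟨c, hc⟩ := Polynomial.natDegree_eq_zero.mp h1
    rw [← hc]; simp
  -- facts about `kap`
  have hke : ∀ (m : ℂ) (z : ℂ),
      (kap σ κ₀ m).eval z = m * (derivative σ).eval z + κ₀.eval z := by
    intro m z; simp [kap]
  have hkd : ∀ (m : ℂ) (z : ℂ), (derivative (kap σ κ₀ m)).eval z
      = m * (derivative (derivative σ)).coeff 0 + (derivative κ₀).coeff 0 := by
    intro m z
    simp [kap, derivative_add, derivative_C_mul, ha z, hb z]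
  have hkc : ∀ m : ℂ, (derivative (kap σ κ₀ m)).coeff 0
      = m * (derivative (derivative σ)).coeff 0 + (derivative κ₀).coeff 0 := by
    intro m
    simp [kap, derivative_add, derivative_C_mul, Polynomial.coeff_C_mul]
  -- the key derivative computation
  have key : ∀ (f : ℂ → ℂ), ContDiff ℂ 3 f → ∀ (κ : Polynomial ℂ) (c z : ℂ),
      deriv (fun w => Hop σ κ f w + c * f w) z
        = σ.eval z * deriv (deriv (deriv f)) z
          + ((derivative σ).eval z + ((derivative σ).eval z + κ.eval z)) * deriv (deriv f) z
          + ((derivative (derivative σ)).eval z + (derivative κ).eval z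
              + ((derivative κ).coeff 0 / 2 + c)) * deriv f z := by
    intro f hf κ c z
    obtain ⟨hd0, hd1, hd2⟩ := diffs hf
    have e : (fun w => Hop σ κ f w + c * f w)
        = fun w => σ.eval w * deriv (deriv f) w + (derivative σ + κ).eval w * deriv f w
            + ((derivative κ).coeff 0 / 2 + c) * f w := by
      funext w; simp only [Hop, eval_add]; ring
    rw [e, deriv_comb3 σ (derivative σ + κ) _ hd2 hd1 hd0]
    simp only [derivative_add, eval_add]
    ring
  -- first transmutation identity
  have part1 : ∀ f : ℂ → ℂ, ContDiff ℂ 3 f → ∀ z,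
      deriv (fun w => Hop σ (kap σ κ₀ n) f w + om σ κ₀ ω₀ n * f w) z
        = Hop σ (kap σ κ₀ (n + 1)) (deriv f) z + om σ κ₀ ω₀ (n + 1) * deriv f z := by
    intro f hf z
    rw [key f hf _ _ z]
    simp only [Hop, om, hke, hkd, hkc, ha z]
    ring
  -- second transmutation identity
  have part2 : ∀ f : ℂ → ℂ, ContDiff ℂ 3 f → ∀ z,
      σ.eval z * deriv (fun w => Hop σ (kap σ κ₀ (n + 1)) f w + om σ κ₀ ω₀ (n + 1) * f w) z
          + (kap σ κ₀ (n + 1)).eval z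
              * (Hop σ (kap σ κ₀ (n + 1)) f z + om σ κ₀ ω₀ (n + 1) * f z)
        = Hop σ (kap σ κ₀ n)
              (fun w => σ.eval w * deriv f w + (kap σ κ₀ (n + 1)).eval w * f w) z
          + om σ κ₀ ω₀ n
              * (σ.eval z * deriv f z + (kap σ κ₀ (n + 1)).eval z * f z) := by
    intro f hf z
    obtain ⟨hd0, hd1, hd2⟩ := diffs hf
    have hgd : deriv (fun w => σ.eval w * deriv f w + (kap σ κ₀ (n + 1)).eval w * f w)
        = fun z => (derivative σ + kap σ κ₀ (n + 1)).eval z * deriv f z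
            + σ.eval z * deriv (deriv f) z
            + ((n + 1) * (derivative (derivative σ)).coeff 0 + (derivative κ₀).coeff 0)
              * f z := by
      rw [deriv_comb2 σ (kap σ κ₀ (n + 1)) hd1 hd0]
      funext w
      rw [hkd (n + 1) w]
      simp only [eval_add]
      ring
    have hgdd : deriv (deriv (fun w => σ.eval w * deriv f w
          + (kap σ κ₀ (n + 1)).eval w * f w))
        = fun z => ((derivative (derivative σ) + derivative (kap σ κ₀ (n + 1))).eval z
              * deriv f z
            + (derivative σ + kap σ κ₀ (n + 1)).eval z * deriv (deriv f) z)
          + ((derivative σ).eval z * deriv (deriv f) z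
              + σ.eval z * deriv (deriv (deriv f)) z)
          + ((n + 1) * (derivative (derivative σ)).coeff 0 + (derivative κ₀).coeff 0)
            * deriv f z := by
      rw [hgd, deriv_comb3 (derivative σ + kap σ κ₀ (n + 1)) σ _ hd1 hd2 hd0]
      simp only [derivative_add]
    rw [key f hf _ _ z]
    simp only [Hop]
    rw [hgdd, hgd]
    simp only [om, eval_add, hke, hkd, hkc, ha z]
    ring
  refine ⟨part1, part2, ?_, ?_⟩
  · intro F hF h z
    have e : (fun w => Hop σ (kap σ κ₀ n) F w + om σ κ₀ ω₀ n * F w) = fun _ => (0 : ℂ) :=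
      funext h
    have := part1 F hF z
    rw [e] at this
    simp only [deriv_const'] at this
    exact this.symm
  · intro F hF h z
    have e : (fun w => Hop σ (kap σ κ₀ (n + 1)) F w + om σ κ₀ ω₀ (n + 1) * F w)
        = fun _ => (0 : ℂ) := funext h
    have h2 := part2 F hF z
    rw [e, h z] at h2
    simp only [deriv_const'] at h2
    rw [← h2]
    ring
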